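/- With the above notation for the case 𝔤 = 𝔰𝔬(4r+2,ℂ), for every dominant tuple of integers m = (m_1,…,m_r) one has C(m) = (1/(2r+1)) · ∏_{j=1}^r ((m_j+2r−2j)(m_j+2r−2j+3))/((m_j+2r−2j+1)(m_j+2r−2j+2)); in particular C(m) = 0 if and only if m_r = 0. -/
import Mathlib


open Finset
open Polynomial

/-- A tuple of integers is dominant if its entries are weakly decreasing and nonnegative. -/
def Dominant {r : ℕ} (m : Fin r → ℤ) : Prop :=
  (∀ j k : Fin r, j ≤ k → m k ≤ m j) ∧ ∀ j : Fin r, 0 ≤ m j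

instance {r : ℕ} (m : Fin r → ℤ) : Decidable (Dominant m) := by
  unfold Dominant; infer_instance

/-- The genus `p = (e+1) + (r-1)d + b/2`. -/
noncomputable def genusP (r : ℕ) (b d e : ℝ) : ℝ := (e + 1) + ((r : ℝ) - 1) * d + b / 2

/-- `n = r(p + b/2)`. -/
noncomputable def dimN (r : ℕ) (b d e : ℝ) : ℝ := r * (genusP r b d e + b / 2)

/-- `ρ_k = (r-k)d/2 + e/2 + b/4` (1-indexed `k`). -/
noncomputable def rho (r : ℕ) (b d e : ℝ) (k : Fin r) : ℝ :=
  ((r : ℝ) - ((k : ℕ) + 1)) * d / 2 + e / 2 + b / 4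

/-- The coefficient `A(m,k)`. -/
noncomputable def Acoef (r : ℕ) (b d e : ℝ) (m : Fin r → ℤ) (k : Fin r) : ℝ :=
  (genusP r b d e / (2 * dimN r b d e)) *
    ((2 * ((m k : ℝ) + rho r b d e k) + b / 2 + 1) *
        (2 * ((m k : ℝ) + rho r b d e k) + b / 2 + e)) /
      ((2 * ((m k : ℝ) + rho r b d e k)) * (2 * ((m k : ℝ) + rho r b d e k) + 1)) *
    ∏ j ∈ univ.erase k,
      ((((m k : ℝ) + rho r b d e k) - ((m j : ℝ) + rho r b d e j) + d / 2) *
          (((m k : ℝ) + rho r b d e k) + ((m j : ℝ) + rho r b d e j) + d / 2)) /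
        ((((m k : ℝ) + rho r b d e k) - ((m j : ℝ) + rho r b d e j)) *
          (((m k : ℝ) + rho r b d e k) + ((m j : ℝ) + rho r b d e j)))

/-- The coefficient `B(m,k)`. -/
noncomputable def Bcoef (r : ℕ) (b d e : ℝ) (m : Fin r → ℤ) (k : Fin r) : ℝ :=
  (genusP r b d e / (2 * dimN r b d e)) *
    ((2 * ((m k : ℝ) + rho r b d e k) - b / 2 - 1) *
        (2 * ((m k : ℝ) + rho r b d e k) - b / 2 - e)) /
      ((2 * ((m k : ℝ) + rho r b d e k)) * (2 * ((m k : ℝ) + rho r b d e k) - 1)) *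
    ∏ j ∈ univ.erase k,
      ((((m k : ℝ) + rho r b d e k) + ((m j : ℝ) + rho r b d e j) - d / 2) *
          (((m k : ℝ) + rho r b d e k) - ((m j : ℝ) + rho r b d e j) - d / 2)) /
        ((((m k : ℝ) + rho r b d e k) + ((m j : ℝ) + rho r b d e j)) *
          (((m k : ℝ) + rho r b d e k) - ((m j : ℝ) + rho r b d e j)))

/-- The coefficient `C(m)`. -/
noncomputable def Ccoef (r : ℕ) (b d e : ℝ) (m : Fin r → ℤ) : ℝ :=
  1 - (∑ k ∈ univ.filter (fun k : Fin r =>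
        Dominant (fun j => m j + if j = k then 1 else 0)), Acoef r b d e m k)
    - (∑ k ∈ univ.filter (fun k : Fin r =>
        Dominant (fun j => m j - if j = k then 1 else 0)), Bcoef r b d e m k)

lemma basis_coeff_top {ι : Type*} [DecidableEq ι] (s : Finset ι) (v : ι → ℝ)
    (hvs : Set.InjOn v s) {i : ι} (hi : i ∈ s) :
    (Lagrange.basis s v i).coeff (s.card - 1) = ∏ j ∈ s.erase i, (v i - v j)⁻¹ := by
  have hd := Lagrange.natDegree_basis hvs hi
  rw [← hd, ← leadingCoeff]
  unfold Lagrange.basis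
  rw [leadingCoeff_prod]
  refine Finset.prod_congr rfl fun j hj => ?_
  unfold Lagrange.basisDivisor
  rw [leadingCoeff_mul, leadingCoeff_C, leadingCoeff_X_sub_C, mul_one]

lemma lagrange_coeff_sum {ι : Type*} [DecidableEq ι] (s : Finset ι) (v : ι → ℝ)
    (hvs : Set.InjOn v s) (f : ℝ[X]) (hf : f.degree < s.card) :
    ∑ i ∈ s, f.eval (v i) / ∏ j ∈ s.erase i, (v i - v j) = f.coeff (s.card - 1) := by
  conv_rhs => rw [show f = _ from Lagrange.eq_interpolate hvs hf]
  rw [Lagrange.interpolate_apply, finset_sum_coeff]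
  refine Finset.sum_congr rfl fun i hi => ?_
  rw [coeff_C_mul, basis_coeff_top s v hvs hi, div_eq_mul_inv, ← Finset.prod_inv_distrib]

lemma prod_erase_univ_eq {ι : Type*} [Fintype ι] [DecidableEq ι] (i0 : ι) (f : ι → ℝ) :
    ∏ j ∈ univ.erase i0, f j = ∏ j, (if j = i0 then 1 else f j) := by
  rw [← Finset.prod_erase (s := (univ : Finset ι)) (f := fun j => if j = i0 then 1 else f j)
    (a := i0) (h := if_pos rfl)]
  exact Finset.prod_congr rfl fun j hj => by rw [if_neg (Finset.ne_of_mem_erase hj)]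

lemma prod_nodes {r : ℕ} (g : (Fin r ⊕ Fin r) ⊕ Bool → ℝ) :
    ∏ i, g i = (∏ a, g (.inl (.inl a))) * (∏ a, g (.inl (.inr a)))
      * (g (.inr true) * g (.inr false)) := by
  rw [Fintype.prod_sum_type, Fintype.prod_sum_type, Fintype.prod_bool]

lemma sum_nodes {r : ℕ} (g : (Fin r ⊕ Fin r) ⊕ Bool → ℝ) :
    ∑ i, g i = ((∑ a, g (.inl (.inl a))) + (∑ a, g (.inl (.inr a))))
      + (g (.inr true) + g (.inr false)) := by
  rw [Fintype.sum_sum_type, Fintype.sum_sum_type, Fintype.sum_bool]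

lemma prod_neg' {α : Type*} (s : Finset α) (f : α → ℝ) :
    ∏ a ∈ s, (-(f a)) = (-1)^s.card * ∏ a ∈ s, f a := by
  rw [← Finset.prod_const, ← Finset.prod_mul_distrib]
  exact Finset.prod_congr rfl fun a _ => (neg_one_mul (f a)).symm

noncomputable def nodeV {r : ℕ} (x : Fin r → ℝ) : (Fin r ⊕ Fin r) ⊕ Bool → ℝ
  | .inl (.inl a) => x a
  | .inl (.inr a) => -x a
  | .inr false => -(1/2)
  | .inr true => -1

noncomputable def nodeW {r : ℕ} (x : Fin r → ℝ) : (Fin r ⊕ Fin r) ⊕ Bool → ℝ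
  | .inl (.inl a) => x a - 2
  | .inl (.inr a) => -x a - 2
  | .inr _ => -(3/2)

@[simp] lemma nodeV_ll {r : ℕ} (x : Fin r → ℝ) (a : Fin r) : nodeV x (.inl (.inl a)) = x a := rfl
@[simp] lemma nodeV_lr {r : ℕ} (x : Fin r → ℝ) (a : Fin r) : nodeV x (.inl (.inr a)) = -x a := rfl
@[simp] lemma nodeV_rf {r : ℕ} (x : Fin r → ℝ) : nodeV x (.inr false) = -(1/2) := rfl
@[simp] lemma nodeV_rt {r : ℕ} (x : Fin r → ℝ) : nodeV x (.inr true) = -1 := rfl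
@[simp] lemma nodeW_ll {r : ℕ} (x : Fin r → ℝ) (a : Fin r) : nodeW x (.inl (.inl a)) = x a - 2 := rfl
@[simp] lemma nodeW_lr {r : ℕ} (x : Fin r → ℝ) (a : Fin r) : nodeW x (.inl (.inr a)) = -x a - 2 := rfl
@[simp] lemma nodeW_r {r : ℕ} (x : Fin r → ℝ) (b : Bool) : nodeW x (.inr b) = -(3/2) := rfl

set_option maxHeartbeats 1000000 in
lemma key_identity (r : ℕ) (hr : 1 < r) (x : Fin r → ℝ)
    (h32 : ∀ k, 3/2 ≤ x k) (hgap : ∀ j k : Fin r, j < k → x k + 2 ≤ x j) :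
    (∑ k, ((2*x k+3)*(2*x k+3))/((2*x k)*(2*x k+1)) *
        ∏ j ∈ univ.erase k, ((x k - x j + 2)*(x k + x j + 2))/((x k - x j)*(x k + x j)))
    + (∑ k, ((2*x k-3)*(2*x k-3))/((2*x k)*(2*x k-1)) *
        ∏ j ∈ univ.erase k, ((x k + x j - 2)*(x k - x j - 2))/((x k + x j)*(x k - x j)))
    + ∏ j, ((x j - 3/2)*(x j + 3/2))/((x j - 1/2)*(x j + 1/2)) = 2*(r:ℝ)+1 := by
  classical
  have hne : ∀ {j k : Fin r}, j ≠ k → x j ≠ x k := by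
    intro j k hjk
    rcases lt_or_gt_of_ne hjk with h | h
    · have := hgap j k h; intro he; linarith
    · have := hgap k j h; intro he; linarith
  have hvinj : Function.Injective (nodeV x) := by
    rintro ((a|a)|(_|_)) ((c|c)|(_|_)) h <;>
      simp only [nodeV_ll, nodeV_lr, nodeV_rf, nodeV_rt] at h <;>
      first
        | rfl
        | (exact congrArg (fun t => Sum.inl (Sum.inl t)) (by by_contra hac; exact hne hac h))
        | (exact congrArg (fun t => Sum.inl (Sum.inr t))
            (by by_contra hac; exact hne hac (neg_injective h)))
        | (exfalso;
           first
             | (have h1 := h32 a; have h2 := h32 c; linarith)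
             | (have h1 := h32 a; linarith)
             | (have h1 := h32 c; linarith)
             | linarith)
  have hcard : (univ : Finset ((Fin r ⊕ Fin r) ⊕ Bool)).card = 2*r+2 := by
    simp [Finset.card_univ, Fintype.card_sum, Fintype.card_bool]; omega
  set NN : ℝ[X] := C (4:ℝ) * Lagrange.nodal univ (nodeW x) with hNN
  set DD : ℝ[X] := C (8:ℝ) * Lagrange.nodal univ (nodeV x) with hDD
  set PP : ℝ[X] := NN - C (1/2:ℝ) * DD with hPP
  have hndW : (Lagrange.nodal univ (nodeW x)).natDegree = 2*r+2 := by
    rw [Lagrange.natDegree_nodal, hcard]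
  have hndV : (Lagrange.nodal univ (nodeV x)).natDegree = 2*r+2 := by
    rw [Lagrange.natDegree_nodal, hcard]
  have hdeg : PP.degree < (((2*r+2 : ℕ) : ℕ) : WithBot ℕ) := by
    rw [degree_lt_iff_coeff_zero]
    intro mm hmm
    rcases eq_or_lt_of_le hmm with he | hlt
    · have h1 : (Lagrange.nodal univ (nodeW x)).coeff mm = 1 := by
        rw [← he, ← hndW]; exact (Lagrange.nodal_monic).coeff_natDegree
      have h2 : (Lagrange.nodal univ (nodeV x)).coeff mm = 1 := by
        rw [← he, ← hndV]; exact (Lagrange.nodal_monic).coeff_natDegree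
      simp [hPP, hNN, hDD, coeff_sub, coeff_C_mul, h1, h2]
      norm_num
    · have h1 : (Lagrange.nodal univ (nodeW x)).coeff mm = 0 :=
        coeff_eq_zero_of_natDegree_lt (by omega)
      have h2 : (Lagrange.nodal univ (nodeV x)).coeff mm = 0 :=
        coeff_eq_zero_of_natDegree_lt (by omega)
      simp [hPP, hNN, hDD, coeff_sub, coeff_C_mul, h1, h2]
  have hW : (Lagrange.nodal univ (nodeW x)).coeff (2*r+1) = 4*(r:ℝ)+3 := by
    have h1 := nextCoeff_of_natDegree_pos (p := Lagrange.nodal univ (nodeW x)) (by omega)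
    rw [hndW] at h1
    have h2 : (2*r+2) - 1 = 2*r+1 := by omega
    rw [h2] at h1
    rw [← h1, Lagrange.nodal_eq, prod_X_sub_C_nextCoeff, sum_nodes (g := nodeW x)]
    simp only [nodeW_ll, nodeW_lr, nodeW_r]
    rw [Finset.sum_sub_distrib, Finset.sum_sub_distrib, Finset.sum_neg_distrib]
    simp [Finset.card_univ]
    ring
  have hV : (Lagrange.nodal univ (nodeV x)).coeff (2*r+1) = 3/2 := by
    have h1 := nextCoeff_of_natDegree_pos (p := Lagrange.nodal univ (nodeV x)) (by omega)
    rw [hndV] at h1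
    have h2 : (2*r+2) - 1 = 2*r+1 := by omega
    rw [h2] at h1
    rw [← h1, Lagrange.nodal_eq, prod_X_sub_C_nextCoeff, sum_nodes (g := nodeV x)]
    simp only [nodeV_ll, nodeV_lr, nodeV_rf, nodeV_rt]
    rw [Finset.sum_neg_distrib]
    ring
  have hcoeffP : PP.coeff (2*r+1) = 16*(r:ℝ)+6 := by
    simp only [hPP, hNN, hDD, coeff_sub, coeff_C_mul, hW, hV]
    ring
  have hmain := lagrange_coeff_sum univ (nodeV x) hvinj.injOn PP (by rw [hcard]; exact hdeg)
  rw [hcard] at hmain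
  have h3 : (2*r+2) - 1 = 2*r+1 := by omega
  rw [h3, hcoeffP, sum_nodes] at hmain
  have hPN : ∀ i, eval (nodeV x i) PP = eval (nodeV x i) NN := by
    intro i
    have h0 : eval (nodeV x i) (Lagrange.nodal univ (nodeV x)) = 0 :=
      Lagrange.eval_nodal_at_node (Finset.mem_univ i)
    simp [hPP, hDD, h0]
  have haK : ∀ k : Fin r, eval (nodeV x (.inl (.inl k))) PP /
      ∏ j ∈ univ.erase (.inl (.inl k)), (nodeV x (.inl (.inl k)) - nodeV x j)
      = 8 * (((2*x k+3)*(2*x k+3))/((2*x k)*(2*x k+1)) *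
        ∏ j ∈ univ.erase k, ((x k - x j + 2)*(x k + x j + 2))/((x k - x j)*(x k + x j))) := by
    intro k
    rw [hPN]
    have hnum : eval (nodeV x (.inl (.inl k))) NN
        = 4 * ((2 * ∏ a ∈ univ.erase k, (x k - x a + 2)) *
               ((2*x k + 2) * ∏ a ∈ univ.erase k, (x k + x a + 2)) *
               ((x k + 3/2) * (x k + 3/2))) := by
      rw [hNN, eval_mul, eval_C, Lagrange.eval_nodal,
        prod_nodes (g := fun i => nodeV x (.inl (.inl k)) - nodeW x i)]
      simp only [nodeV_ll, nodeW_ll, nodeW_lr, nodeW_r]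
      rw [Finset.prod_congr rfl (fun a _ => (by ring : x k - (x a - 2) = x k - x a + 2)),
        Finset.prod_congr rfl (fun a _ => (by ring : x k - (-x a - 2) = x k + x a + 2)),
        ← Finset.mul_prod_erase univ (fun a => x k - x a + 2) (Finset.mem_univ k),
        ← Finset.mul_prod_erase univ (fun a => x k + x a + 2) (Finset.mem_univ k)]
      ring
    have hden : ∏ j ∈ univ.erase (.inl (.inl k)), (nodeV x (.inl (.inl k)) - nodeV x j)
        = (∏ a ∈ univ.erase k, (x k - x a)) * ((2*x k) * ∏ a ∈ univ.erase k, (x k + x a)) *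
          ((x k + 1) * (x k + 1/2)) := by
      rw [prod_erase_univ_eq,
        prod_nodes (g := fun j => if j = .inl (.inl k) then 1 else nodeV x (.inl (.inl k)) - nodeV x j)]
      simp only [nodeV_ll, nodeV_lr, nodeV_rf, nodeV_rt, Sum.inl.injEq, Sum.inr.injEq,
        reduceCtorEq, if_false, ite_false]
      rw [← prod_erase_univ_eq k (fun a => x k - x a),
        Finset.prod_congr rfl (fun a _ => (by ring : x k - -x a = x k + x a)),
        ← Finset.mul_prod_erase univ (fun a => x k + x a) (Finset.mem_univ k)]
      ring
    have hp1 : (∏ a ∈ univ.erase k, (x k - x a)) ≠ 0 :=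
      Finset.prod_ne_zero_iff.2 fun a ha =>
        sub_ne_zero.2 (hne (Ne.symm (Finset.ne_of_mem_erase ha)))
    have hp2 : (∏ a ∈ univ.erase k, (x k + x a)) ≠ 0 :=
      Finset.prod_ne_zero_iff.2 fun a _ => by
        have h1 := h32 a; have h2 := h32 k; intro h0; linarith
    have hprodA : ∏ j ∈ univ.erase k, ((x k - x j + 2)*(x k + x j + 2))/((x k - x j)*(x k + x j))
        = ((∏ j ∈ univ.erase k, (x k - x j + 2)) * (∏ j ∈ univ.erase k, (x k + x j + 2))) /
          ((∏ j ∈ univ.erase k, (x k - x j)) * (∏ j ∈ univ.erase k, (x k + x j))) := by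
      rw [← Finset.prod_mul_distrib, ← Finset.prod_mul_distrib, ← Finset.prod_div_distrib]
    have hk2 := h32 k
    have hxk0 : x k ≠ 0 := by intro h0; linarith
    have hxk1 : (2*x k + 1) ≠ 0 := by intro h0; linarith
    have hxk2 : (x k + 1) ≠ 0 := by intro h0; linarith
    have hxk3 : (x k + 1/2) ≠ 0 := by intro h0; linarith
    set P1 := ∏ a ∈ univ.erase k, (x k - x a) with hP1
    set P2 := ∏ a ∈ univ.erase k, (x k + x a) with hP2s
    set Q1 := ∏ a ∈ univ.erase k, (x k - x a + 2) with hQ1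
    set Q2 := ∏ a ∈ univ.erase k, (x k + x a + 2) with hQ2
    rw [hnum, hden, hprodA]
    field_simp
    ring
  have hbK : ∀ k : Fin r, eval (nodeV x (.inl (.inr k))) PP /
      ∏ j ∈ univ.erase (.inl (.inr k)), (nodeV x (.inl (.inr k)) - nodeV x j)
      = 8 * (((2*x k-3)*(2*x k-3))/((2*x k)*(2*x k-1)) *
        ∏ j ∈ univ.erase k, ((x k + x j - 2)*(x k - x j - 2))/((x k + x j)*(x k - x j))) := by
    intro k
    rw [hPN]
    have hs : ((-1:ℝ))^r = 1 ∨ ((-1:ℝ))^r = -1 := by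
      rcases Nat.even_or_odd r with h | h
      · exact Or.inl (Even.neg_one_pow h)
      · exact Or.inr (Odd.neg_one_pow h)
    have hs3 : ((-1:ℝ))^(r-1) = -((-1:ℝ))^r := by
      have h4 : r = (r - 1) + 1 := by omega
      conv_rhs => rw [h4, pow_succ]
      ring
    have hcu : (univ : Finset (Fin r)).card = r := by
      rw [Finset.card_univ, Fintype.card_fin]
    have hce : ((univ : Finset (Fin r)).erase k).card = r - 1 := by
      rw [Finset.card_erase_of_mem (Finset.mem_univ k), hcu]
    have hnum : eval (nodeV x (.inl (.inr k))) NN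
        = 4 * ((((-1:ℝ))^r * ((2*x k - 2) * ∏ a ∈ univ.erase k, (x k + x a - 2))) *
               (((-1:ℝ))^r * ((-2) * ∏ a ∈ univ.erase k, (x k - x a - 2))) *
               ((3/2 - x k) * (3/2 - x k))) := by
      rw [hNN, eval_mul, eval_C, Lagrange.eval_nodal,
        prod_nodes (g := fun i => nodeV x (.inl (.inr k)) - nodeW x i)]
      simp only [nodeV_lr, nodeW_ll, nodeW_lr, nodeW_r]
      rw [Finset.prod_congr rfl (fun a _ => (by ring : -x k - (x a - 2) = -(x k + x a - 2))),
        Finset.prod_congr rfl (fun a _ => (by ring : -x k - (-x a - 2) = -(x k - x a - 2))),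
        prod_neg' univ (fun a => x k + x a - 2), prod_neg' univ (fun a => x k - x a - 2), hcu,
        ← Finset.mul_prod_erase univ (fun a => x k + x a - 2) (Finset.mem_univ k),
        ← Finset.mul_prod_erase univ (fun a => x k - x a - 2) (Finset.mem_univ k)]
      ring
    have hden : ∏ j ∈ univ.erase (.inl (.inr k)), (nodeV x (.inl (.inr k)) - nodeV x j)
        = (((-1:ℝ))^r * ((2*x k) * ∏ a ∈ univ.erase k, (x k + x a))) *
          ((-((-1:ℝ))^r) * ∏ a ∈ univ.erase k, (x k - x a)) *
          ((1 - x k) * (1/2 - x k)) := by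
      rw [prod_erase_univ_eq,
        prod_nodes (g := fun j => if j = .inl (.inr k) then 1 else nodeV x (.inl (.inr k)) - nodeV x j)]
      simp only [nodeV_ll, nodeV_lr, nodeV_rf, nodeV_rt, Sum.inl.injEq, Sum.inr.injEq,
        reduceCtorEq, if_false, ite_false]
      rw [← prod_erase_univ_eq k (fun a => -x k - -x a),
        Finset.prod_congr rfl (fun a _ => (by ring : -x k - x a = -(x k + x a))),
        Finset.prod_congr rfl (fun a (_ : a ∈ univ.erase k) =>
          (by ring : -x k - -x a = -(x k - x a))),
        prod_neg' univ (fun a => x k + x a), prod_neg' (univ.erase k) (fun a => x k - x a),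
        hcu, hce, hs3,
        ← Finset.mul_prod_erase univ (fun a => x k + x a) (Finset.mem_univ k)]
      ring
    have hp1 : (∏ a ∈ univ.erase k, (x k - x a)) ≠ 0 :=
      Finset.prod_ne_zero_iff.2 fun a ha =>
        sub_ne_zero.2 (hne (Ne.symm (Finset.ne_of_mem_erase ha)))
    have hp2 : (∏ a ∈ univ.erase k, (x k + x a)) ≠ 0 :=
      Finset.prod_ne_zero_iff.2 fun a _ => by
        have h1 := h32 a; have h2 := h32 k; intro h0; linarith
    have hprodB : ∏ j ∈ univ.erase k, ((x k + x j - 2)*(x k - x j - 2))/((x k + x j)*(x k - x j))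
        = ((∏ j ∈ univ.erase k, (x k + x j - 2)) * (∏ j ∈ univ.erase k, (x k - x j - 2))) /
          ((∏ j ∈ univ.erase k, (x k + x j)) * (∏ j ∈ univ.erase k, (x k - x j))) := by
      rw [← Finset.prod_mul_distrib, ← Finset.prod_mul_distrib, ← Finset.prod_div_distrib]
    have hk2 := h32 k
    have hxk0 : x k ≠ 0 := by intro h0; linarith
    have hxk1 : (2*x k - 1) ≠ 0 := by intro h0; linarith
    have hxk2 : (1 - x k) ≠ 0 := by intro h0; linarith
    have hxk3 : (1/2 - x k) ≠ 0 := by intro h0; linarith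
    set P1 := ∏ a ∈ univ.erase k, (x k - x a) with hP1
    set P2 := ∏ a ∈ univ.erase k, (x k + x a) with hP2s
    set Q1 := ∏ a ∈ univ.erase k, (x k - x a - 2) with hQ1
    set Q2 := ∏ a ∈ univ.erase k, (x k + x a - 2) with hQ2
    have hpow : ((-1:ℝ))^r ≠ 0 := pow_ne_zero _ (by norm_num)
    have hD0 : ((((-1:ℝ))^r * ((2*x k) * P2)) * ((-((-1:ℝ))^r) * P1)) * ((1 - x k) * (1/2 - x k)) ≠ 0 := by
      apply mul_ne_zero
      · apply mul_ne_zero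
        · exact mul_ne_zero hpow (mul_ne_zero (by intro h0; linarith) hp2)
        · exact mul_ne_zero (neg_ne_zero.2 hpow) hp1
      · exact mul_ne_zero hxk2 hxk3
    have hR0 : ((2*x k)*(2*x k-1))*(P2*P1) ≠ 0 :=
      mul_ne_zero (mul_ne_zero (by intro h0; linarith) hxk1) (mul_ne_zero hp2 hp1)
    have hR : (8:ℝ) * (((2*x k-3)*(2*x k-3))/((2*x k)*(2*x k-1)) * ((Q2*Q1)/(P2*P1)))
        = 8 * (((2*x k-3)*(2*x k-3)) * (Q2*Q1)) / (((2*x k)*(2*x k-1)) * (P2*P1)) := by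
      rw [div_mul_div_comm, ← mul_div_assoc]
    rw [hnum, hden, hprodB, hR, div_eq_div_iff hD0 hR0]
    rcases hs with h | h <;> rw [h] <;> ring
  have hfK : eval (nodeV x (.inr false)) PP /
      ∏ j ∈ univ.erase (.inr false), (nodeV x (.inr false) - nodeV x j)
      = 8 * ∏ j, ((x j - 3/2)*(x j + 3/2))/((x j - 1/2)*(x j + 1/2)) := by
    rw [hPN]
    have hs : ((-1:ℝ))^r = 1 ∨ ((-1:ℝ))^r = -1 := by
      rcases Nat.even_or_odd r with h | h
      · exact Or.inl (Even.neg_one_pow h)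
      · exact Or.inr (Odd.neg_one_pow h)
    have hcu : (univ : Finset (Fin r)).card = r := by
      rw [Finset.card_univ, Fintype.card_fin]
    have hnum : eval (nodeV x (.inr false)) NN
        = 4 * ((((-1:ℝ))^r * ∏ a, (x a - 3/2)) * (∏ a, (x a + 3/2))) := by
      rw [hNN, eval_mul, eval_C, Lagrange.eval_nodal,
        prod_nodes (g := fun i => nodeV x (.inr false) - nodeW x i)]
      simp only [nodeV_rf, nodeW_ll, nodeW_lr, nodeW_r]
      rw [Finset.prod_congr rfl (fun a _ => (by ring : -(1/2) - (x a - 2) = -(x a - 3/2))),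
        Finset.prod_congr rfl (fun a _ => (by ring : -(1/2) - (-x a - 2) = x a + 3/2)),
        prod_neg' univ (fun a => x a - 3/2), hcu]
      norm_num
    have hden : ∏ j ∈ univ.erase (.inr false), (nodeV x (.inr false) - nodeV x j)
        = (((-1:ℝ))^r * ∏ a, (x a + 1/2)) * (∏ a, (x a - 1/2)) * (1/2) := by
      rw [prod_erase_univ_eq,
        prod_nodes (g := fun j => if j = .inr false then 1 else nodeV x (.inr false) - nodeV x j)]
      simp only [nodeV_ll, nodeV_lr, nodeV_rf, nodeV_rt, Sum.inr.injEq, reduceCtorEq,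
        if_false, ite_false, Bool.true_eq_false, if_true, ite_true]
      rw [Finset.prod_congr rfl (fun a (_ : a ∈ univ) => (by ring : -(1/2) - x a = -(x a + 1/2))),
        Finset.prod_congr rfl (fun a (_ : a ∈ univ) => (by ring : -(1/2) - -x a = x a - 1/2)),
        prod_neg' univ (fun a => x a + 1/2), hcu]
      norm_num
    have hq1 : (∏ a, (x a - 1/2)) ≠ 0 :=
      Finset.prod_ne_zero_iff.2 fun a _ => by have h1 := h32 a; intro h0; linarith
    have hq2 : (∏ a, (x a + 1/2)) ≠ 0 :=
      Finset.prod_ne_zero_iff.2 fun a _ => by have h1 := h32 a; intro h0; linarith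
    have hprodF : ∏ j, ((x j - 3/2)*(x j + 3/2))/((x j - 1/2)*(x j + 1/2))
        = ((∏ j, (x j - 3/2)) * (∏ j, (x j + 3/2))) /
          ((∏ j, (x j - 1/2)) * (∏ j, (x j + 1/2))) := by
      rw [← Finset.prod_mul_distrib, ← Finset.prod_mul_distrib, ← Finset.prod_div_distrib]
    set F3m := ∏ a, (x a - 3/2) with hF3m
    set F3p := ∏ a, (x a + 3/2) with hF3p
    set F1m := ∏ a, (x a - 1/2) with hF1m
    set F1p := ∏ a, (x a + 1/2) with hF1p
    have hpow : ((-1:ℝ))^r ≠ 0 := pow_ne_zero _ (by norm_num)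
    have hD0 : (((-1:ℝ))^r * F1p) * F1m * (1/2) ≠ 0 := by
      apply mul_ne_zero (mul_ne_zero (mul_ne_zero hpow hq2) hq1)
      norm_num
    have hR0 : F1m * F1p ≠ 0 := mul_ne_zero hq1 hq2
    have hR : (8:ℝ) * ((F3m * F3p) / (F1m * F1p)) = (8 * (F3m * F3p)) / (F1m * F1p) := by
      rw [← mul_div_assoc]
    rw [hnum, hden, hprodF, hR, div_eq_div_iff hD0 hR0]
    rcases hs with h | h <;> rw [h] <;> ring
  have htK : eval (nodeV x (.inr true)) PP /
      ∏ j ∈ univ.erase (.inr true), (nodeV x (.inr true) - nodeV x j) = -2 := by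
    rw [hPN]
    have hs : ((-1:ℝ))^r = 1 ∨ ((-1:ℝ))^r = -1 := by
      rcases Nat.even_or_odd r with h | h
      · exact Or.inl (Even.neg_one_pow h)
      · exact Or.inr (Odd.neg_one_pow h)
    have hcu : (univ : Finset (Fin r)).card = r := by
      rw [Finset.card_univ, Fintype.card_fin]
    have hnum : eval (nodeV x (.inr true)) NN
        = 4 * ((((-1:ℝ))^r * ∏ a, (x a - 1)) * (∏ a, (x a + 1))) * (1/4) := by
      rw [hNN, eval_mul, eval_C, Lagrange.eval_nodal,
        prod_nodes (g := fun i => nodeV x (.inr true) - nodeW x i)]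
      simp only [nodeV_rt, nodeW_ll, nodeW_lr, nodeW_r]
      rw [Finset.prod_congr rfl (fun a _ => (by ring : -1 - (x a - 2) = -(x a - 1))),
        Finset.prod_congr rfl (fun a _ => (by ring : -1 - (-x a - 2) = x a + 1)),
        prod_neg' univ (fun a => x a - 1), hcu]
      ring
    have hden : ∏ j ∈ univ.erase (.inr true), (nodeV x (.inr true) - nodeV x j)
        = (((-1:ℝ))^r * ∏ a, (x a + 1)) * (∏ a, (x a - 1)) * (-(1/2)) := by
      rw [prod_erase_univ_eq,
        prod_nodes (g := fun j => if j = .inr true then 1 else nodeV x (.inr true) - nodeV x j)]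
      simp only [nodeV_ll, nodeV_lr, nodeV_rf, nodeV_rt, Sum.inr.injEq, reduceCtorEq,
        if_false, ite_false, Bool.false_eq_true, if_true, ite_true]
      rw [Finset.prod_congr rfl (fun a (_ : a ∈ univ) => (by ring : -1 - x a = -(x a + 1))),
        Finset.prod_congr rfl (fun a (_ : a ∈ univ) => (by ring : -1 - -x a = x a - 1)),
        prod_neg' univ (fun a => x a + 1), hcu]
      norm_num
    have hq1 : (∏ a, (x a - 1)) ≠ 0 :=
      Finset.prod_ne_zero_iff.2 fun a _ => by have h1 := h32 a; intro h0; linarith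
    have hq2 : (∏ a, (x a + 1)) ≠ 0 :=
      Finset.prod_ne_zero_iff.2 fun a _ => by have h1 := h32 a; intro h0; linarith
    set E1m := ∏ a, (x a - 1) with hE1m
    set E1p := ∏ a, (x a + 1) with hE1p
    have hpow : ((-1:ℝ))^r ≠ 0 := pow_ne_zero _ (by norm_num)
    have hD0 : (((-1:ℝ))^r * E1p) * E1m * (-(1/2)) ≠ 0 := by
      apply mul_ne_zero (mul_ne_zero (mul_ne_zero hpow hq2) hq1)
      norm_num
    rw [hnum, hden, div_eq_iff hD0]
    rcases hs with h | h <;> rw [h] <;> ring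
  rw [Finset.sum_congr rfl (fun k _ => haK k), Finset.sum_congr rfl (fun k _ => hbK k),
    hfK, htK, ← Finset.mul_sum, ← Finset.mul_sum] at hmain
  linarith

set_option maxHeartbeats 1000000 in
theorem Cm_so_complex (r : ℕ) (hr : 1 < r) (m : Fin r → ℤ) (hm : Dominant m) :
    Ccoef r 4 4 1 m
        = (1 / (2 * (r : ℝ) + 1)) *
          ∏ j : Fin r,
            (((m j : ℝ) + 2 * (r : ℝ) - 2 * ((j : ℕ) + 1)) *
                ((m j : ℝ) + 2 * (r : ℝ) - 2 * ((j : ℕ) + 1) + 3)) /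
              (((m j : ℝ) + 2 * (r : ℝ) - 2 * ((j : ℕ) + 1) + 1) *
                ((m j : ℝ) + 2 * (r : ℝ) - 2 * ((j : ℕ) + 1) + 2)) ∧
      (Ccoef r 4 4 1 m = 0 ↔ m ⟨r - 1, by omega⟩ = 0) := by
  have hr0 : (0:ℝ) < r := by exact_mod_cast (by omega : 0 < r)
  have ht0 : (0:ℝ) < 2*(r:ℝ)+1 := by linarith
  have hconst : genusP r 4 4 1 / (2 * dimN r 4 4 1) = 1/(2*(r:ℝ)+1) := by
    unfold dimN genusP
    rw [div_eq_div_iff (by nlinarith) (by linarith)]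
    ring
  -- the abbreviation x
  set x : Fin r → ℝ := fun k => (m k : ℝ) + rho r 4 4 1 k with hxd
  have hxe : ∀ k : Fin r, x k = (m k : ℝ) + 2*(r:ℝ) - 2*((k:ℕ)+1) + 3/2 := by
    intro k; rw [hxd]; unfold rho; ring
  have h32 : ∀ k, 3/2 ≤ x k := by
    intro k
    have h1 : (0:ℝ) ≤ (m k : ℝ) := by exact_mod_cast hm.2 k
    have h2 : ((k:ℕ):ℝ) + 1 ≤ (r:ℝ) := by exact_mod_cast k.isLt
    rw [hxe]; linarith
  have hgap : ∀ j k : Fin r, j < k → x k + 2 ≤ x j := by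
    intro j k hjk
    have h1 : (m k : ℝ) ≤ (m j : ℝ) := by exact_mod_cast hm.1 j k (le_of_lt hjk)
    have h2 : ((j:ℕ):ℝ) + 1 ≤ ((k:ℕ):ℝ) := by exact_mod_cast hjk
    rw [hxe, hxe]; linarith
  have hkey := key_identity r hr x h32 hgap
  -- A and B coefficients in terms of x
  have hA : ∀ k, Acoef r 4 4 1 m k = 1/(2*(r:ℝ)+1) *
      (((2*x k+3)*(2*x k+3))/((2*x k)*(2*x k+1)) *
        ∏ j ∈ univ.erase k, ((x k - x j + 2)*(x k + x j + 2))/((x k - x j)*(x k + x j))) := by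
    intro k
    unfold Acoef
    rw [hconst]
    rw [Finset.prod_congr rfl (fun j (_ : j ∈ univ.erase k) => by
      rw [show ((m k : ℝ) + rho r 4 4 1 k) = x k from rfl,
          show ((m j : ℝ) + rho r 4 4 1 j) = x j from rfl]
      norm_num : ∀ j ∈ univ.erase k,
        ((((m k : ℝ) + rho r 4 4 1 k) - ((m j : ℝ) + rho r 4 4 1 j) + 4/2) *
          (((m k : ℝ) + rho r 4 4 1 k) + ((m j : ℝ) + rho r 4 4 1 j) + 4/2)) /
        ((((m k : ℝ) + rho r 4 4 1 k) - ((m j : ℝ) + rho r 4 4 1 j)) *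
          (((m k : ℝ) + rho r 4 4 1 k) + ((m j : ℝ) + rho r 4 4 1 j)))
        = ((x k - x j + 2)*(x k + x j + 2))/((x k - x j)*(x k + x j)))]
    rw [show ((m k : ℝ) + rho r 4 4 1 k) = x k from rfl]
    norm_num
    ring
  have hB : ∀ k, Bcoef r 4 4 1 m k = 1/(2*(r:ℝ)+1) *
      (((2*x k-3)*(2*x k-3))/((2*x k)*(2*x k-1)) *
        ∏ j ∈ univ.erase k, ((x k + x j - 2)*(x k - x j - 2))/((x k + x j)*(x k - x j))) := by
    intro k
    unfold Bcoef
    rw [hconst]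
    rw [Finset.prod_congr rfl (fun j (_ : j ∈ univ.erase k) => by
      rw [show ((m k : ℝ) + rho r 4 4 1 k) = x k from rfl,
          show ((m j : ℝ) + rho r 4 4 1 j) = x j from rfl]
      norm_num : ∀ j ∈ univ.erase k,
        ((((m k : ℝ) + rho r 4 4 1 k) + ((m j : ℝ) + rho r 4 4 1 j) - 4/2) *
          (((m k : ℝ) + rho r 4 4 1 k) - ((m j : ℝ) + rho r 4 4 1 j) - 4/2)) /
        ((((m k : ℝ) + rho r 4 4 1 k) + ((m j : ℝ) + rho r 4 4 1 j)) *
          (((m k : ℝ) + rho r 4 4 1 k) - ((m j : ℝ) + rho r 4 4 1 j)))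
        = ((x k + x j - 2)*(x k - x j - 2))/((x k + x j)*(x k - x j)))]
    rw [show ((m k : ℝ) + rho r 4 4 1 k) = x k from rfl]
    norm_num
    ring
  -- removing the dominance filters
  have hSA : ∑ k ∈ univ.filter (fun k : Fin r =>
        Dominant (fun j => m j + if j = k then 1 else 0)), Acoef r 4 4 1 m k
      = ∑ k, Acoef r 4 4 1 m k := by
    apply Finset.sum_subset (Finset.filter_subset _ _)
    intro k _ hk
    rw [Finset.mem_filter] at hk
    have hnd : ¬ Dominant (fun j => m j + if j = k then 1 else 0) :=
      fun h => hk ⟨Finset.mem_univ k, h⟩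
    have hmono : ¬(∀ j j' : Fin r, j ≤ j' →
        m j' + (if j' = k then (1:ℤ) else 0) ≤ m j + (if j = k then 1 else 0)) := by
      intro hmo
      exact hnd ⟨hmo, fun j => by have := hm.2 j; dsimp only; split_ifs <;> omega⟩
    push_neg at hmono
    obtain ⟨j, j', hjj', hlt⟩ := hmono
    have h1 : m j' ≤ m j := hm.1 j j' hjj'
    have hj'k : j' = k := by
      by_contra hne'
      rw [if_neg hne'] at hlt
      split_ifs at hlt <;> omega
    subst hj'k
    have hjne : j ≠ j' := by
      intro h; rw [h] at hlt; omega
    rw [if_neg hjne, if_pos rfl] at hlt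
    have hjlt : (j:ℕ) < (j':ℕ) := Fin.lt_def.1 (lt_of_le_of_ne hjj' hjne)
    have hkr := j'.isLt
    set kp : Fin r := ⟨(j':ℕ) - 1, by omega⟩ with hkpd
    have hkp1 : m kp = m j' := by
      have ha : m kp ≤ m j := hm.1 j kp (by simp only [Fin.le_def, hkpd]; omega)
      have hb : m j' ≤ m kp := hm.1 kp j' (by simp only [Fin.le_def, hkpd]; omega)
      omega
    have hkpmem : kp ∈ univ.erase j' :=
      Finset.mem_erase.2 ⟨Fin.ne_of_val_ne (by simp [hkpd]; omega), Finset.mem_univ kp⟩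
    unfold Acoef
    rw [Finset.prod_eq_zero hkpmem ?_, mul_zero]
    have hmc : ((m kp : ℝ)) = (m j' : ℝ) := by exact_mod_cast hkp1
    have hvc : ((kp:ℕ):ℝ) = ((j':ℕ):ℝ) - 1 := by
      simp only [hkpd]
      push_cast [Nat.cast_sub (by omega : 1 ≤ (j':ℕ))]
      ring
    have hzero : ((m j' : ℝ) + rho r 4 4 1 j') - ((m kp : ℝ) + rho r 4 4 1 kp) + 4/2 = 0 := by
      unfold rho
      rw [hmc, hvc]; ring
    rw [hzero, zero_mul, zero_div]
  have hSB : ∑ k ∈ univ.filter (fun k : Fin r =>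
        Dominant (fun j => m j - if j = k then 1 else 0)), Bcoef r 4 4 1 m k
      = ∑ k, Bcoef r 4 4 1 m k := by
    apply Finset.sum_subset (Finset.filter_subset _ _)
    intro k _ hk
    rw [Finset.mem_filter] at hk
    have hnd : ¬ Dominant (fun j => m j - if j = k then 1 else 0) :=
      fun h => hk ⟨Finset.mem_univ k, h⟩
    have hkr := k.isLt
    -- helper: adjacent equality implies vanishing
    have hvanish : ∀ kp : Fin r, (kp:ℕ) = (k:ℕ) + 1 → m kp = m k → Bcoef r 4 4 1 m k = 0 := by
      intro kp hv hmeq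
      have hkpmem : kp ∈ univ.erase k :=
        Finset.mem_erase.2 ⟨Fin.ne_of_val_ne (by omega), Finset.mem_univ kp⟩
      unfold Bcoef
      rw [Finset.prod_eq_zero hkpmem ?_, mul_zero]
      have hmc : ((m kp : ℝ)) = (m k : ℝ) := by exact_mod_cast hmeq
      have hvc : ((kp:ℕ):ℝ) = ((k:ℕ):ℝ) + 1 := by rw [hv]; push_cast; ring
      have hzero : ((m k : ℝ) + rho r 4 4 1 k) - ((m kp : ℝ) + rho r 4 4 1 kp) - 4/2 = 0 := by
        unfold rho
        rw [hmc, hvc]; ring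
      rw [hzero, mul_zero, zero_div]
    by_cases hnn : ∀ j : Fin r, 0 ≤ m j - if j = k then (1:ℤ) else 0
    · have hmono : ¬(∀ j j' : Fin r, j ≤ j' →
          m j' - (if j' = k then (1:ℤ) else 0) ≤ m j - (if j = k then 1 else 0)) := by
        intro hmo
        exact hnd ⟨hmo, hnn⟩
      push_neg at hmono
      obtain ⟨j, j', hjj', hlt⟩ := hmono
      have h1 : m j' ≤ m j := hm.1 j j' hjj'
      have hjk : j = k := by
        by_contra hne'
        rw [if_neg hne'] at hlt
        split_ifs at hlt <;> omega
      subst hjk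
      have hjne : j' ≠ j := by
        intro h; rw [h] at hlt; omega
      rw [if_pos rfl, if_neg hjne] at hlt
      have hjlt : (j:ℕ) < (j':ℕ) := Fin.lt_def.1 (lt_of_le_of_ne hjj' (Ne.symm hjne))
      have hkr2 := j'.isLt
      have hmeq : m j' = m j := by omega
      set kp : Fin r := ⟨(j:ℕ) + 1, by omega⟩ with hkpd
      refine hvanish kp (by simp [hkpd]) ?_
      have ha : m kp ≤ m j := hm.1 j kp (by simp only [Fin.le_def, hkpd]; omega)
      have hb : m j' ≤ m kp := hm.1 kp j' (by simp only [Fin.le_def, hkpd]; omega)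
      omega
    · push_neg at hnn
      obtain ⟨j, hj⟩ := hnn
      have hjk : j = k := by
        by_contra hne'
        rw [if_neg hne'] at hj
        have := hm.2 j; omega
      subst hjk
      rw [if_pos rfl] at hj
      have hj0 : m j = 0 := by have := hm.2 j; omega
      by_cases hlast : (j:ℕ) = r - 1
      · -- vanishing prefactor
        unfold Bcoef
        have hvc : ((j:ℕ):ℝ) = (r:ℝ) - 1 := by
          rw [hlast]
          push_cast [Nat.cast_sub (by omega : 1 ≤ r)]
          ring
        have hmc : ((m j : ℝ)) = 0 := by exact_mod_cast hj0
        have hzero : 2 * ((m j : ℝ) + rho r 4 4 1 j) - 4/2 - 1 = 0 := by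
          unfold rho
          rw [hmc, hvc]; ring
        rw [hzero]; simp
      · set kp : Fin r := ⟨(j:ℕ) + 1, by omega⟩ with hkpd
        refine hvanish kp (by simp [hkpd]) ?_
        have ha : m kp ≤ m j := hm.1 j kp (by simp only [Fin.le_def, hkpd]; omega)
        have hb := hm.2 kp
        omega
  have hpart1 : Ccoef r 4 4 1 m = (1 / (2 * (r : ℝ) + 1)) *
      ∏ j : Fin r,
        (((m j : ℝ) + 2 * (r : ℝ) - 2 * ((j : ℕ) + 1)) *
            ((m j : ℝ) + 2 * (r : ℝ) - 2 * ((j : ℕ) + 1) + 3)) /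
          (((m j : ℝ) + 2 * (r : ℝ) - 2 * ((j : ℕ) + 1) + 1) *
            ((m j : ℝ) + 2 * (r : ℝ) - 2 * ((j : ℕ) + 1) + 2)) := by
    have hprodT : ∏ j : Fin r,
        (((m j : ℝ) + 2 * (r : ℝ) - 2 * ((j : ℕ) + 1)) *
            ((m j : ℝ) + 2 * (r : ℝ) - 2 * ((j : ℕ) + 1) + 3)) /
          (((m j : ℝ) + 2 * (r : ℝ) - 2 * ((j : ℕ) + 1) + 1) *
            ((m j : ℝ) + 2 * (r : ℝ) - 2 * ((j : ℕ) + 1) + 2))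
        = ∏ j, ((x j - 3/2)*(x j + 3/2))/((x j - 1/2)*(x j + 1/2)) :=
      Finset.prod_congr rfl fun j _ => by rw [hxe j]; congr 1 <;> ring
    unfold Ccoef
    rw [hSA, hSB, Finset.sum_congr rfl (fun k _ => hA k),
      Finset.sum_congr rfl (fun k _ => hB k), hprodT, ← Finset.mul_sum, ← Finset.mul_sum]
    have hti : (1/(2*(r:ℝ)+1)) * (2*(r:ℝ)+1) = 1 := one_div_mul_cancel (ne_of_gt ht0)
    linear_combination (-(1/(2*(r:ℝ)+1))) * hkey - hti
  refine ⟨hpart1, ?_⟩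
  rw [hpart1]
  set jl : Fin r := ⟨r - 1, by omega⟩ with hjl
  have hc1 : ((jl:ℕ):ℝ) = (r:ℝ) - 1 := by
    simp only [hjl]
    push_cast [Nat.cast_sub (by omega : 1 ≤ r)]
    ring
  constructor
  · intro h0
    have hPi : (∏ j : Fin r,
        (((m j : ℝ) + 2 * (r : ℝ) - 2 * ((j : ℕ) + 1)) *
            ((m j : ℝ) + 2 * (r : ℝ) - 2 * ((j : ℕ) + 1) + 3)) /
          (((m j : ℝ) + 2 * (r : ℝ) - 2 * ((j : ℕ) + 1) + 1) *
            ((m j : ℝ) + 2 * (r : ℝ) - 2 * ((j : ℕ) + 1) + 2))) = 0 := by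
      by_contra hne0
      exact (mul_ne_zero (one_div_ne_zero (ne_of_gt ht0)) hne0) h0
    rw [Finset.prod_eq_zero_iff] at hPi
    obtain ⟨j, _, hj0⟩ := hPi
    have hmj : (0:ℝ) ≤ (m j : ℝ) := by exact_mod_cast hm.2 j
    have hjr : ((j:ℕ):ℝ) + 1 ≤ (r:ℝ) := by exact_mod_cast j.isLt
    have hy0 : (0:ℝ) ≤ (m j : ℝ) + 2*(r:ℝ) - 2*(((j:ℕ):ℝ)+1) := by linarith
    have hden : (((m j : ℝ) + 2*(r:ℝ) - 2*(((j:ℕ):ℝ)+1) + 1) *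
        ((m j : ℝ) + 2*(r:ℝ) - 2*(((j:ℕ):ℝ)+1) + 2)) ≠ 0 :=
      ne_of_gt (mul_pos (by linarith) (by linarith))
    rw [_root_.div_eq_zero_iff] at hj0
    rcases hj0 with hnum | hd
    · rcases mul_eq_zero.1 hnum with h5 | h5
      · have hjval : (j:ℕ) = r - 1 := by
          by_contra hne'
          have hjlt : (j:ℕ) + 1 + 1 ≤ r := by have := j.isLt; omega
          have h6 : ((j:ℕ):ℝ) + 2 ≤ (r:ℝ) := by exact_mod_cast hjlt
          linarith
        have hjeq : j = jl := Fin.ext (by rw [hjval])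
        rw [hjeq, hc1] at h5
        have h7 : (m jl : ℝ) = 0 := by linarith
        exact_mod_cast h7
      · exfalso; linarith
    · exact absurd hd hden
  · intro hmz
    have hmz' : (m jl : ℝ) = 0 := by exact_mod_cast hmz
    have hyz : (m jl : ℝ) + 2*(r:ℝ) - 2*(((jl:ℕ):ℝ)+1) = 0 := by
      rw [hmz', hc1]; ring
    rw [Finset.prod_eq_zero (Finset.mem_univ jl) (by rw [hyz, zero_mul, zero_div]), mul_zero]
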